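/- arXiv:1901.03069 — 5 statements merged into one kernel-verified Lean document; each statement's English description precedes it below -/
import Mathlib

section
/- Let A ∈ ℝ^{n×n}, a ∈ ℝ, 0 ≤ θ ≤ π/2, α = sin θ, β = cos θ. Suppose A = (J−R)Q with J skew-symmetric, R symmetric, Q symmetric positive definite, and the 2n×2n block matrix [[α(R + aQ⁻¹), −βJ], [βJ, α(R + aQ⁻¹)]] is positive definite. Then every eigenvalue λ = λ₁ + iλ₂ of A satisfies α(λ₁ − a) < β·λ₂ < −α(λ₁ − a), i.e., λ ∈ Ω_C(a,θ). -/
open Matrix Complex Real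

private lemma re_form {n : ℕ} (M : Matrix (Fin n) (Fin n) ℝ) (w : Fin n → ℂ) :
    (star w ⬝ᵥ ((M.map Complex.ofReal) *ᵥ w)).re
      = (fun i => (w i).re) ⬝ᵥ (M *ᵥ fun i => (w i).re)
        + (fun i => (w i).im) ⬝ᵥ (M *ᵥ fun i => (w i).im) := by
  simp only [dotProduct, mulVec, Matrix.map_apply, Pi.star_apply, Finset.mul_sum,
    Complex.re_sum, ← Finset.sum_add_distrib]
  refine Finset.sum_congr rfl fun i _ => Finset.sum_congr rfl fun k _ => ?_
  simp [Complex.mul_re, Complex.mul_im]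

private lemma im_form {n : ℕ} (M : Matrix (Fin n) (Fin n) ℝ) (w : Fin n → ℂ) :
    (star w ⬝ᵥ ((M.map Complex.ofReal) *ᵥ w)).im
      = (fun i => (w i).re) ⬝ᵥ (M *ᵥ fun i => (w i).im)
        - (fun i => (w i).im) ⬝ᵥ (M *ᵥ fun i => (w i).re) := by
  simp only [dotProduct, mulVec, Matrix.map_apply, Pi.star_apply, Finset.mul_sum,
    Complex.im_sum, ← Finset.sum_sub_distrib]
  refine Finset.sum_congr rfl fun i _ => Finset.sum_congr rfl fun k _ => ?_
  simp [Complex.mul_re, Complex.mul_im]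
  ring

private lemma dot_transpose {n : ℕ} (M : Matrix (Fin n) (Fin n) ℝ) (z y : Fin n → ℝ) :
    z ⬝ᵥ (M *ᵥ y) = y ⬝ᵥ (Mᵀ *ᵥ z) := by
  rw [Matrix.dotProduct_mulVec, ← Matrix.mulVec_transpose, dotProduct_comm]

private lemma mapc_mul {n : ℕ} (M N : Matrix (Fin n) (Fin n) ℝ) :
    (M * N).map Complex.ofReal = M.map Complex.ofReal * N.map Complex.ofReal :=
  Matrix.map_mul (f := Complex.ofRealHom)

theorem stmt_3 {n : ℕ} (A J R Q : Matrix (Fin n) (Fin n) ℝ) (a θ : ℝ)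
    (hθ₁ : 0 ≤ θ) (hθ₂ : θ ≤ π / 2) (α β : ℝ) (hα : α = Real.sin θ) (hβ : β = Real.cos θ)
    (hJ : Jᵀ = -J) (hR : Rᵀ = R) (hQ : Q.PosDef) (hA : A = (J - R) * Q)
    (hblk : (Matrix.fromBlocks (α • (R + a • Q⁻¹)) (-(β • J)) (β • J) (α • (R + a • Q⁻¹))).PosDef) :
    ∀ (lam : ℂ) (v : Fin n → ℂ), v ≠ 0 → (A.map (Complex.ofReal)) *ᵥ v = lam • v →
      α * (lam.re - a) < β * lam.im ∧ β * lam.im < -(α * (lam.re - a)) := by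
  intro lam v hv heig
  have hQdet : IsUnit Q.det := hQ.det_pos.ne'.isUnit
  have hQt : Qᵀ = Q := by
    ext i j
    have := congrFun (congrFun hQ.1 i) j
    simpa using this
  have hQit : (Q⁻¹)ᵀ = Q⁻¹ := by rw [Matrix.transpose_nonsing_inv, hQt]
  have hQinv : (Q⁻¹).PosDef := hQ.inv
  set w : Fin n → ℂ := Q.map Complex.ofReal *ᵥ v with hw
  set x : Fin n → ℝ := fun i => (w i).re with hxd
  set y : Fin n → ℝ := fun i => (w i).im with hyd
  have hvw : (Q⁻¹.map Complex.ofReal) *ᵥ w = v := by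
    rw [hw, Matrix.mulVec_mulVec, ← mapc_mul, Matrix.nonsing_inv_mul Q hQdet]
    simp
  have hwne : w ≠ 0 := by
    intro h
    apply hv
    rw [← hvw, h, Matrix.mulVec_zero]
  have hwv : (J - R).map Complex.ofReal *ᵥ w = lam • v := by
    rw [hw, Matrix.mulVec_mulVec, ← mapc_mul, ← hA]
    exact heig
  -- the key complex identity
  have key : star w ⬝ᵥ ((J - R).map Complex.ofReal *ᵥ w)
      = lam * (star w ⬝ᵥ (Q⁻¹.map Complex.ofReal *ᵥ w)) := by
    rw [hwv, hvw]
    simp [dotProduct_smul, smul_eq_mul, Finset.mul_sum]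
  have hmapsub : (J - R).map Complex.ofReal
      = J.map Complex.ofReal - R.map Complex.ofReal := Matrix.map_sub _ (by simp) _ _
  set jc : ℂ := star w ⬝ᵥ (J.map Complex.ofReal *ᵥ w) with hjc
  set rc : ℂ := star w ⬝ᵥ (R.map Complex.ofReal *ᵥ w) with hrc
  set qc : ℂ := star w ⬝ᵥ (Q⁻¹.map Complex.ofReal *ᵥ w) with hqc
  have key2 : jc - rc = lam * qc := by
    rw [hjc, hrc, ← dotProduct_sub, ← Matrix.sub_mulVec, ← hmapsub]
    exact key
  -- scalar quantities
  set rxx := x ⬝ᵥ (R *ᵥ x) with hrxx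
  set ryy := y ⬝ᵥ (R *ᵥ y) with hryy
  set qxx := x ⬝ᵥ (Q⁻¹ *ᵥ x) with hqxx
  set qyy := y ⬝ᵥ (Q⁻¹ *ᵥ y) with hqyy
  set jxy := x ⬝ᵥ (J *ᵥ y) with hjxy
  set jyx := y ⬝ᵥ (J *ᵥ x) with hjyx
  have hjre : jc.re = 0 := by
    have h1 : x ⬝ᵥ (J *ᵥ x) = 0 := by
      have := dot_transpose J x x
      rw [hJ, Matrix.neg_mulVec, dotProduct_neg] at this
      linarith
    have h2 : y ⬝ᵥ (J *ᵥ y) = 0 := by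
      have := dot_transpose J y y
      rw [hJ, Matrix.neg_mulVec, dotProduct_neg] at this
      linarith
    rw [hjc, re_form]
    rw [← hxd, ← hyd, h1, h2, add_zero]
  have hjim : jc.im = jxy - jyx := by
    rw [hjc, im_form, ← hxd, ← hyd, hjxy, hjyx]
  have hrre : rc.re = rxx + ryy := by
    rw [hrc, re_form, ← hxd, ← hyd, hrxx, hryy]
  have hrim : rc.im = 0 := by
    rw [hrc, im_form, ← hxd, ← hyd]
    have h := dot_transpose R x y
    rw [hR] at h
    linarith
  have hqre : qc.re = qxx + qyy := by
    rw [hqc, re_form, ← hxd, ← hyd, hqxx, hqyy]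
  have hqim : qc.im = 0 := by
    rw [hqc, im_form, ← hxd, ← hyd]
    have h := dot_transpose Q⁻¹ x y
    rw [hQit] at h
    linarith
  -- positivity of q
  have hq_pos : 0 < qxx + qyy := by
    rcases Function.ne_iff.mp hwne with ⟨i, hi⟩
    have hxy : x ≠ 0 ∨ y ≠ 0 := by
      by_contra h
      push_neg at h
      apply hi
      have hx0 := congrFun h.1 i
      have hy0 := congrFun h.2 i
      simp only [hxd, hyd, Pi.zero_apply] at hx0 hy0
      exact Complex.ext hx0 hy0
    have sxx : 0 ≤ x ⬝ᵥ (Q⁻¹ *ᵥ x) := by simpa using hQinv.posSemidef.dotProduct_mulVec_nonneg x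
    have syy : 0 ≤ y ⬝ᵥ (Q⁻¹ *ᵥ y) := by simpa using hQinv.posSemidef.dotProduct_mulVec_nonneg y
    rcases hxy with hx | hy
    · have h := hQinv.dotProduct_mulVec_pos hx
      simp only [star_trivial] at h
      rw [hqxx, hqyy]
      linarith
    · have h := hQinv.dotProduct_mulVec_pos hy
      simp only [star_trivial] at h
      rw [hqxx, hqyy]
      linarith
  -- the two real equations
  have F1 : lam.re * (qxx + qyy) = -(rxx + ryy) := by
    have := congrArg Complex.re key2
    rw [Complex.sub_re, Complex.mul_re, hjre, hrre, hqre, hqim] at this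
    linarith
  have F2 : lam.im * (qxx + qyy) = jxy - jyx := by
    have := congrArg Complex.im key2
    rw [Complex.sub_im, Complex.mul_im, hjim, hrim, hqre, hqim] at this
    linarith
  -- block positivity applications
  have hform : ∀ (x' y' : Fin n → ℝ), Sum.elim x' y' ≠ 0 →
      0 < α * (x' ⬝ᵥ (R *ᵥ x')) + α * a * (x' ⬝ᵥ (Q⁻¹ *ᵥ x'))
        + α * (y' ⬝ᵥ (R *ᵥ y')) + α * a * (y' ⬝ᵥ (Q⁻¹ *ᵥ y'))
        - β * (x' ⬝ᵥ (J *ᵥ y')) + β * (y' ⬝ᵥ (J *ᵥ x')) := by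
    intro x' y' hne
    have := hblk.dotProduct_mulVec_pos hne
    simp only [star_trivial, Matrix.fromBlocks_mulVec, sumElim_dotProduct_sumElim,
      Sum.elim_comp_inl, Sum.elim_comp_inr, Matrix.add_mulVec, Matrix.smul_mulVec,
      Matrix.neg_mulVec, dotProduct_add, dotProduct_smul, dotProduct_neg, smul_eq_mul] at this
    linarith
  have hne1 : Sum.elim x y ≠ 0 := by
    rcases Function.ne_iff.mp hwne with ⟨i, hi⟩
    intro h
    apply hi
    have hx0 := congrFun h (Sum.inl i)
    have hy0 := congrFun h (Sum.inr i)
    simp only [hxd, hyd, Sum.elim_inl, Sum.elim_inr, Pi.zero_apply] at hx0 hy0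
    exact Complex.ext hx0 hy0
  have hne2 : Sum.elim x (-y) ≠ 0 := by
    rcases Function.ne_iff.mp hwne with ⟨i, hi⟩
    intro h
    apply hi
    have hx0 := congrFun h (Sum.inl i)
    have hy0 := congrFun h (Sum.inr i)
    simp only [hxd, hyd, Sum.elim_inl, Sum.elim_inr, Pi.zero_apply, Pi.neg_apply,
      neg_eq_zero] at hx0 hy0
    exact Complex.ext hx0 hy0
  have P1 := hform x y hne1
  have P2 := hform x (-y) hne2
  simp only [Matrix.mulVec_neg, dotProduct_neg, neg_dotProduct, neg_neg] at P2
  rw [← hrxx, ← hryy, ← hqxx, ← hqyy, ← hjxy, ← hjyx] at P1 P2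
  have e1 : α * (lam.re * (qxx + qyy)) = α * (-(rxx + ryy)) := by rw [F1]
  have e2 : β * (lam.im * (qxx + qyy)) = β * (jxy - jyx) := by rw [F2]
  constructor
  · have h : (α * (lam.re - a)) * (qxx + qyy) < (β * lam.im) * (qxx + qyy) := by
      linarith [P2, e1, e2]
    exact lt_of_mul_lt_mul_right h hq_pos.le
  · have h : (β * lam.im) * (qxx + qyy) < (-(α * (lam.re - a))) * (qxx + qyy) := by
      linarith [P1, e1, e2]
    exact lt_of_mul_lt_mul_right h hq_pos.le
end

section
/- Let A ∈ ℝ^{n×n} and h < k be real numbers (possibly h = −∞ or k = +∞ interpreted as absent constraints). Suppose A = (J−R)Q with J skew-symmetric, R symmetric, Q symmetric positive definite, and kQ⁻¹ − R and R − hQ⁻¹ are both positive definite. Then every eigenvalue λ of A satisfies −k < Re(λ) < −h. -/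
open Matrix Complex

lemma form_re {n : ℕ} (M : Matrix (Fin n) (Fin n) ℝ) (x : Fin n → ℂ) :
    (star x ⬝ᵥ ((M.map (Complex.ofReal)) *ᵥ x)).re
      = (fun i => (x i).re) ⬝ᵥ (M *ᵥ fun i => (x i).re)
        + (fun i => (x i).im) ⬝ᵥ (M *ᵥ fun i => (x i).im) := by
  simp only [dotProduct, mulVec, Matrix.map_apply, Pi.star_apply, Finset.mul_sum,
    Complex.re_sum, Complex.mul_re, Complex.ofReal_re, Complex.ofReal_im,
    RCLike.star_def, Complex.conj_re, Complex.conj_im, Complex.mul_im]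
  rw [← Finset.sum_add_distrib]
  refine Finset.sum_congr rfl fun i _ => ?_
  rw [← Finset.sum_add_distrib]
  refine Finset.sum_congr rfl fun j _ => ?_
  ring

lemma form_im {n : ℕ} (M : Matrix (Fin n) (Fin n) ℝ) (x : Fin n → ℂ) :
    (star x ⬝ᵥ ((M.map (Complex.ofReal)) *ᵥ x)).im
      = (fun i => (x i).re) ⬝ᵥ (M *ᵥ fun i => (x i).im)
        - (fun i => (x i).im) ⬝ᵥ (M *ᵥ fun i => (x i).re) := by
  simp only [dotProduct, mulVec, Matrix.map_apply, Pi.star_apply, Finset.mul_sum,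
    Complex.im_sum, Complex.mul_re, Complex.ofReal_re, Complex.ofReal_im,
    RCLike.star_def, Complex.conj_re, Complex.conj_im, Complex.mul_im]
  rw [← Finset.sum_sub_distrib]
  refine Finset.sum_congr rfl fun i _ => ?_
  rw [← Finset.sum_sub_distrib]
  refine Finset.sum_congr rfl fun j _ => ?_
  ring

lemma skew_form {n : ℕ} {J : Matrix (Fin n) (Fin n) ℝ} (hJ : Jᵀ = -J) (a : Fin n → ℝ) :
    a ⬝ᵥ (J *ᵥ a) = 0 := by
  have h1 : a ⬝ᵥ (J *ᵥ a) = (Jᵀ *ᵥ a) ⬝ᵥ a := by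
    rw [Matrix.dotProduct_mulVec, Matrix.mulVec_transpose]
  rw [hJ] at h1
  simp only [Matrix.neg_mulVec, neg_dotProduct] at h1
  rw [dotProduct_comm (J *ᵥ a) a] at h1
  linarith

lemma sym_form {n : ℕ} {R : Matrix (Fin n) (Fin n) ℝ} (hR : Rᵀ = R) (a b : Fin n → ℝ) :
    a ⬝ᵥ (R *ᵥ b) = b ⬝ᵥ (R *ᵥ a) := by
  conv_lhs => rw [Matrix.dotProduct_mulVec, ← Matrix.mulVec_transpose, hR, dotProduct_comm]

lemma star_mulVec_real {n : ℕ} (M : Matrix (Fin n) (Fin n) ℝ) (v : Fin n → ℂ) :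
    star ((M.map (Complex.ofReal)) *ᵥ v) = (M.map (Complex.ofReal)) *ᵥ (star v) := by
  funext i
  simp [mulVec, dotProduct, Matrix.map_apply, map_sum, mul_comm]

lemma re_im_nonzero {n : ℕ} {x : Fin n → ℂ} (hx : x ≠ 0) :
    (fun i => (x i).re) ≠ 0 ∨ (fun i => (x i).im) ≠ 0 := by
  by_contra hc
  push_neg at hc
  apply hx
  funext i
  have h1 := congrFun hc.1 i
  have h2 := congrFun hc.2 i
  simp only [Pi.zero_apply] at h1 h2 ⊢
  exact Complex.ext h1 h2

lemma posdef_complex {n : ℕ} {M : Matrix (Fin n) (Fin n) ℝ} (hM : M.PosDef)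
    {x : Fin n → ℂ} (hx : x ≠ 0) :
    0 < (star x ⬝ᵥ ((M.map (Complex.ofReal)) *ᵥ x)).re := by
  rw [form_re]
  have hpos : ∀ a : Fin n → ℝ, a ≠ 0 → 0 < a ⬝ᵥ (M *ᵥ a) := fun a ha => by
    simpa using hM.dotProduct_mulVec_pos ha
  have hnn : ∀ a : Fin n → ℝ, 0 ≤ a ⬝ᵥ (M *ᵥ a) := fun a => by
    simpa using hM.posSemidef.dotProduct_mulVec_nonneg a
  rcases re_im_nonzero hx with h | h
  · exact add_pos_of_pos_of_nonneg (hpos _ h) (hnn _)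
  · exact add_pos_of_nonneg_of_pos (hnn _) (hpos _ h)

lemma map_mul_real {n : ℕ} (M N : Matrix (Fin n) (Fin n) ℝ) :
    (M * N).map (Complex.ofReal) = (M.map (Complex.ofReal)) * (N.map (Complex.ofReal)) := by
  ext i j
  simp [Matrix.mul_apply, Matrix.map_apply]

theorem stmt_4 {n : ℕ} (A J R Q : Matrix (Fin n) (Fin n) ℝ) (h k : ℝ) (hhk : h < k)
    (hJ : Jᵀ = -J) (hR : Rᵀ = R) (hQ : Q.PosDef) (hA : A = (J - R) * Q)
    (hk' : (k • Q⁻¹ - R).PosDef) (hh' : (R - h • Q⁻¹).PosDef) :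
    ∀ (lam : ℂ) (v : Fin n → ℂ), v ≠ 0 → (A.map (Complex.ofReal)) *ᵥ v = lam • v →
      -k < lam.re ∧ lam.re < -h := by
  intro lam v hv heig
  have hQdet : IsUnit Q.det := isUnit_iff_ne_zero.mpr (ne_of_gt hQ.det_pos)
  have hQsym : Qᵀ = Q := (by simpa using hQ.1 : Q.IsSymm).eq
  set Qc := Q.map (Complex.ofReal) with hQc
  set w : Fin n → ℂ := Qc *ᵥ v with hw
  have hmap1 : (Q⁻¹.map (Complex.ofReal)) * Qc = 1 := by
    rw [hQc, ← map_mul_real, Matrix.nonsing_inv_mul Q hQdet]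
    ext i j
    simp [Matrix.map_apply, Matrix.one_apply]
    split <;> simp
  have hv' : (Q⁻¹.map (Complex.ofReal)) *ᵥ w = v := by
    rw [hw, mulVec_mulVec, hmap1, one_mulVec]
  have hw0 : w ≠ 0 := by
    intro h0
    apply hv
    rw [← hv', h0, mulVec_zero]
  have hQcT : Qcᵀ = Qc := by
    rw [hQc, ← Matrix.transpose_map, hQsym]
  -- eigen equation in terms of w
  have hAv : (A.map (Complex.ofReal)) *ᵥ v = ((J - R).map (Complex.ofReal)) *ᵥ w := by
    rw [hA, map_mul_real, ← mulVec_mulVec, hw]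
  have hE : star w ⬝ᵥ (((J - R).map (Complex.ofReal)) *ᵥ w) = lam * (star w ⬝ᵥ v) := by
    rw [← hAv, heig, dotProduct_smul, smul_eq_mul]
  -- c = star w ⬝ᵥ v is the Q-form of v
  have hc : star w ⬝ᵥ v = star v ⬝ᵥ (Qc *ᵥ v) :=
    calc star w ⬝ᵥ v = (Qc *ᵥ star v) ⬝ᵥ v := by rw [hw, star_mulVec_real]
      _ = v ⬝ᵥ (Qc *ᵥ star v) := dotProduct_comm _ _
      _ = (v ᵥ* Qc) ⬝ᵥ star v := dotProduct_mulVec _ _ _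
      _ = (Qcᵀ *ᵥ v) ⬝ᵥ star v := by rw [mulVec_transpose]
      _ = (Qc *ᵥ v) ⬝ᵥ star v := by rw [hQcT]
      _ = star v ⬝ᵥ (Qc *ᵥ v) := dotProduct_comm _ _
  set c : ℂ := star w ⬝ᵥ v with hcdef
  have hcre : 0 < c.re := by
    rw [hc, hQc]
    exact posdef_complex hQ hv
  have hcim : c.im = 0 := by
    rw [hc, hQc, form_im, sym_form hQsym, sub_self]
  -- real-imag parts of w
  set aw : Fin n → ℝ := fun i => (w i).re with haw
  set bw : Fin n → ℝ := fun i => (w i).im with hbw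
  -- p := Q⁻¹-form of w equals c
  have hp : star w ⬝ᵥ ((Q⁻¹.map (Complex.ofReal)) *ᵥ w) = c := by
    rw [hv', hcdef]
  have hpre : aw ⬝ᵥ (Q⁻¹ *ᵥ aw) + bw ⬝ᵥ (Q⁻¹ *ᵥ bw) = c.re := by
    rw [← form_re, hp]
  -- r := R-form of w
  set r : ℝ := aw ⬝ᵥ (R *ᵥ aw) + bw ⬝ᵥ (R *ᵥ bw) with hrdef
  -- real part of eigen equation : -r = lam.re * c.re
  have hEre : -r = lam.re * c.re := by
    have h1 := congrArg Complex.re hE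
    rw [form_re] at h1
    simp only [Matrix.sub_mulVec, dotProduct_sub, skew_form hJ] at h1
    rw [Complex.mul_re, hcim] at h1
    simp only [mul_zero, sub_zero, zero_sub] at h1
    rw [hrdef]
    linarith [h1]
  -- bound from k
  have hK : 0 < k * c.re - r := by
    have h1 := posdef_complex hk' hw0
    rw [form_re] at h1
    simp only [Matrix.sub_mulVec, Matrix.smul_mulVec, dotProduct_sub,
      dotProduct_smul, smul_eq_mul] at h1
    rw [← haw, ← hbw] at h1
    have h2 : k * (aw ⬝ᵥ (Q⁻¹ *ᵥ aw)) + k * (bw ⬝ᵥ (Q⁻¹ *ᵥ bw)) = k * c.re := by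
      rw [← hpre]; ring
    rw [hrdef]
    linarith [h1, h2]
  have hH : 0 < r - h * c.re := by
    have h1 := posdef_complex hh' hw0
    rw [form_re] at h1
    simp only [Matrix.sub_mulVec, Matrix.smul_mulVec, dotProduct_sub,
      dotProduct_smul, smul_eq_mul] at h1
    rw [← haw, ← hbw] at h1
    have h2 : h * (aw ⬝ᵥ (Q⁻¹ *ᵥ aw)) + h * (bw ⬝ᵥ (Q⁻¹ *ᵥ bw)) = h * c.re := by
      rw [← hpre]; ring
    rw [hrdef]
    linarith [h1, h2]
  constructor
  · nlinarith [hEre, hK, hcre]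
  · nlinarith [hEre, hH, hcre]
end

section
/- Let A ∈ ℝ^{n×n}, q ∈ ℝ, r > 0. Suppose A = (J−R)Q with J skew-symmetric, R symmetric, Q symmetric positive definite, and the 2n×2n block matrix [[rQ⁻¹, −qQ⁻¹ − (J−R)], [−qQ⁻¹ − (J−R)ᵀ, rQ⁻¹]] is positive definite. Then every eigenvalue λ of A satisfies |λ + q| < r. -/
open Matrix Complex

lemma re_quad {m : Type*} [Fintype m] (M : Matrix m m ℝ) (x : m → ℂ) :
    (star x ⬝ᵥ (M.map (Complex.ofReal)) *ᵥ x).re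
      = (fun i => (x i).re) ⬝ᵥ M *ᵥ (fun i => (x i).re)
        + (fun i => (x i).im) ⬝ᵥ M *ᵥ (fun i => (x i).im) := by
  simp only [dotProduct, mulVec, Pi.star_apply, map_apply, Complex.re_sum, Finset.mul_sum,
    ← Finset.sum_add_distrib]
  refine Finset.sum_congr rfl fun i _ => Finset.sum_congr rfl fun j _ => ?_
  simp [Complex.mul_re, Complex.mul_im]

lemma map_posdef_re {m : Type*} [Fintype m] (M : Matrix m m ℝ) (hM : M.PosDef)
    (x : m → ℂ) (hx : x ≠ 0) : 0 < (star x ⬝ᵥ (M.map (Complex.ofReal)) *ᵥ x).re := by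
  rw [re_quad]
  set a := fun i => (x i).re with ha
  set b := fun i => (x i).im with hb
  have hab : a ≠ 0 ∨ b ≠ 0 := by
    by_contra h
    push_neg at h
    apply hx
    funext i
    have h1 := congrFun h.1 i
    have h2 := congrFun h.2 i
    simp [ha, hb] at h1 h2
    exact Complex.ext h1 h2
  have key : ∀ w : m → ℝ, 0 ≤ w ⬝ᵥ M *ᵥ w := fun w => by
    simpa using hM.posSemidef.dotProduct_mulVec_nonneg w
  have key2 : ∀ w : m → ℝ, w ≠ 0 → 0 < w ⬝ᵥ M *ᵥ w := fun w hw => by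
    simpa using hM.dotProduct_mulVec_pos hw
  rcases hab with h | h
  · exact add_pos_of_pos_of_nonneg (key2 a h) (key b)
  · exact add_pos_of_nonneg_of_pos (key a) (key2 b h)

lemma conjT_quad {m : Type*} [Fintype m] (A : Matrix m m ℂ) (u : m → ℂ) :
    star u ⬝ᵥ Aᴴ *ᵥ u = star (star u ⬝ᵥ A *ᵥ u) := by
  rw [star_dotProduct]
  congr 1
  rw [star_mulVec, conjTranspose_conjTranspose, ← dotProduct_mulVec]

theorem stmt_7 {n : ℕ} (A J R Q : Matrix (Fin n) (Fin n) ℝ) (q r : ℝ) (hr : 0 < r)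
    (hJ : Jᵀ = -J) (hR : Rᵀ = R) (hQ : Q.PosDef) (hA : A = (J - R) * Q)
    (hblk : (Matrix.fromBlocks (r • Q⁻¹) (-(q • Q⁻¹) - (J - R))
              (-(q • Q⁻¹) - (J - R)ᵀ) (r • Q⁻¹)).PosDef) :
    ∀ (lam : ℂ) (v : Fin n → ℂ), v ≠ 0 → (A.map (Complex.ofReal)) *ᵥ v = lam • v →
      ‖lam + q‖ < r := by
  intro lam v hv hAv
  have hmap : ∀ (X Y : Matrix (Fin n) (Fin n) ℝ),
      (X * Y).map (Complex.ofReal) = X.map (Complex.ofReal) * Y.map (Complex.ofReal) := by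
    intro X Y
    ext i j
    simp [Matrix.map_apply, Matrix.mul_apply]
  set Sm := J - R with hSm
  set Qc := Q.map (Complex.ofReal) with hQc
  set Sc := Sm.map (Complex.ofReal) with hScdef
  set Ic := Q⁻¹.map (Complex.ofReal) with hIc
  have hdet : IsUnit Q.det := hQ.det_pos.ne'.isUnit
  have hIcQc : Ic * Qc = 1 := by
    rw [hIc, hQc, ← hmap, Matrix.nonsing_inv_mul Q hdet]
    ext i j
    simp only [Matrix.map_apply, Matrix.one_apply]
    split <;> simp
  set u := Qc *ᵥ v with hu
  have hIcu : Ic *ᵥ u = v := by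
    rw [hu, Matrix.mulVec_mulVec, hIcQc, Matrix.one_mulVec]
  have hu0 : u ≠ 0 := by
    intro h
    apply hv
    rw [← hIcu, h, Matrix.mulVec_zero]
  have hQcH : Qcᴴ = Qc := by
    ext i j
    have := congrFun (congrFun hQ.1 i) j
    simp only [Matrix.conjTranspose_apply, Matrix.map_apply, hQc] at this ⊢
    simp only [RCLike.star_def, Complex.conj_ofReal]
    exact_mod_cast this
  set c := star v ⬝ᵥ Qc *ᵥ v with hcdef
  have hc_re : 0 < c.re := map_posdef_re Q hQ v hv
  have hsuv : star u ⬝ᵥ v = c := by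
    rw [hu, Matrix.star_mulVec, ← Matrix.dotProduct_mulVec, hQcH, hcdef]
  have hc : star c = c := by
    rw [hcdef, ← conjT_quad, hQcH]
  have hAc : A.map (Complex.ofReal) = Sc * Qc := by rw [hA, hmap]
  have hu1 : Sc *ᵥ u = lam • v := by
    rw [hu, Matrix.mulVec_mulVec, ← hAc, hAv]
  have e0 : star u ⬝ᵥ Ic *ᵥ u = c := by rw [hIcu, hsuv]
  have e1 : star u ⬝ᵥ Sc *ᵥ u = lam * c := by
    rw [hu1, dotProduct_smul, smul_eq_mul, hsuv]
  have e2 : star u ⬝ᵥ Scᴴ *ᵥ u = star lam * c := by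
    rw [conjT_quad, e1, star_mul', hc]
  -- block matrix over ℂ
  have hScH : Smᵀ.map (Complex.ofReal) = Scᴴ := by
    ext i j
    simp [Matrix.map_apply, Matrix.conjTranspose_apply, hScdef]
  have hPc : (Matrix.fromBlocks (r • Q⁻¹) (-(q • Q⁻¹) - Sm)
        (-(q • Q⁻¹) - Smᵀ) (r • Q⁻¹)).map (Complex.ofReal)
      = Matrix.fromBlocks ((r : ℂ) • Ic) (-((q : ℂ) • Ic) - Sc)
          (-((q : ℂ) • Ic) - Scᴴ) ((r : ℂ) • Ic) := by
    have b1 : (r • Q⁻¹).map (Complex.ofReal) = (r : ℂ) • Ic := by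
      ext i j
      simp [Matrix.map_apply, hIc]
    have b2 : (-(q • Q⁻¹) - Sm).map (Complex.ofReal) = -((q : ℂ) • Ic) - Sc := by
      ext i j
      simp [Matrix.map_apply, hIc, hScdef]
    have b3 : (-(q • Q⁻¹) - Smᵀ).map (Complex.ofReal) = -((q : ℂ) • Ic) - Scᴴ := by
      rw [← hScH]
      ext i j
      simp [Matrix.map_apply, hIc]
    rw [Matrix.fromBlocks_map, b1, b2, b3]
  rcases eq_or_ne (lam + (q : ℂ)) 0 with h0 | h0
  · rw [h0]
    simpa using hr
  set t := ‖lam + (q : ℂ)‖ with htdef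
  have ht : 0 < t := by
    rw [htdef]
    exact norm_pos_iff.mpr h0
  obtain ⟨β, hβ1, hβ2, hβ3⟩ : ∃ β : ℂ, β * (lam + (q : ℂ)) = (t : ℂ) ∧
      star β * star (lam + (q : ℂ)) = (t : ℂ) ∧ star β * β = 1 := by
    have htne : (t : ℂ) ≠ 0 := by exact_mod_cast ht.ne'
    refine ⟨star (lam + (q : ℂ)) / (t : ℂ), ?_, ?_, ?_⟩
    · rw [div_mul_eq_mul_div, Complex.star_def, Complex.conj_mul', htdef]
      push_cast
      field_simp
    · simp only [star_div₀, star_star, Complex.star_def, Complex.conj_conj,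
        Complex.conj_ofReal, div_mul_eq_mul_div]
      rw [Complex.mul_conj, Complex.normSq_eq_norm_sq, ← htdef]
      push_cast
      field_simp
    · simp only [star_div₀, star_star, Complex.star_def, Complex.conj_conj,
        Complex.conj_ofReal, div_mul_div_comm]
      rw [Complex.mul_conj, Complex.normSq_eq_norm_sq, ← htdef]
      push_cast
      field_simp
  set x : (Fin n ⊕ Fin n) → ℂ := Sum.elim u (β • u) with hx
  have hx0 : x ≠ 0 := by
    intro h
    apply hu0
    funext i
    have := congrFun h (Sum.inl i)
    simpa [hx] using this
  have hXre := map_posdef_re _ hblk x hx0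
  rw [hPc] at hXre
  have hX : star x ⬝ᵥ (Matrix.fromBlocks ((r : ℂ) • Ic) (-((q : ℂ) • Ic) - Sc)
          (-((q : ℂ) • Ic) - Scᴴ) ((r : ℂ) • Ic)) *ᵥ x
      = ((2 * r - 2 * t : ℝ) : ℂ) * c := by
    rw [hx, Matrix.fromBlocks_mulVec, Function.star_sumElim, sumElim_dotProduct_sumElim]
    simp only [Sum.elim_comp_inl, Sum.elim_comp_inr, Matrix.sub_mulVec, Matrix.neg_mulVec, Matrix.mulVec_smul, Matrix.smul_mulVec,
      star_smul, smul_dotProduct, dotProduct_smul, dotProduct_add,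
      dotProduct_sub, dotProduct_neg, neg_dotProduct, sub_dotProduct,
      smul_eq_mul, e0, e1, e2]
    have hsw : star (lam + (q : ℂ)) = star lam + (q : ℂ) := by
      rw [star_add]
      congr 1
      exact Complex.conj_ofReal q
    push_cast
    linear_combination (-(c : ℂ)) * hβ1 + (-c) * hβ2 + ((r : ℂ) * c) * hβ3 + (c * star β) * hsw
  rw [hX, Complex.re_ofReal_mul] at hXre
  nlinarith [hc_re, hXre]
end

section
/- Let A ∈ ℝ^{n×n}, q ≥ r > 0, and X a real symmetric positive definite matrix such that the block matrix [[−rX, qX + AX], [qX + XAᵀ, −rX]] is negative definite. Then the matrix R = −(AX + XAᵀ)/2 is positive semidefinite (in fact positive definite). -/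
open Matrix

theorem stmt_8 {n : ℕ} (A X : Matrix (Fin n) (Fin n) ℝ) (q r : ℝ)
    (hq : q ≥ r) (hr : 0 < r) (hX : X.PosDef)
    (hblk : (-(Matrix.fromBlocks (-(r • X)) (q • X + A * X)
                (q • X + X * Aᵀ) (-(r • X)))).PosDef) :
    ((-(1 / 2 : ℝ)) • (A * X + X * Aᵀ)).PosSemidef ∧
      ((-(1 / 2 : ℝ)) • (A * X + X * Aᵀ)).PosDef := by
  have hXh : Xᴴ = X := hX.isHermitian
  have hherm : ((-(1 / 2 : ℝ)) • (A * X + X * Aᵀ)).IsHermitian := by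
    unfold Matrix.IsHermitian
    have hXt : Xᵀ = X := by simpa using hXh
    simp [conjTranspose_smul, conjTranspose_add, conjTranspose_mul, hXt]
    rw [add_comm]
  have hpd : ((-(1 / 2 : ℝ)) • (A * X + X * Aᵀ)).PosDef := by
    refine PosDef.of_dotProduct_mulVec_pos hherm (fun x hx => ?_)
    have hv : (Sum.elim x x : Fin n ⊕ Fin n → ℝ) ≠ 0 := by
      intro h
      apply hx
      funext i
      exact congrFun h (Sum.inl i)
    have h2 := hblk.dotProduct_mulVec_pos hv
    have hs := hX.dotProduct_mulVec_pos hx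
    simp only [star_trivial] at h2 hs ⊢
    rw [neg_mulVec, dotProduct_neg, fromBlocks_mulVec] at h2
    simp only [sumElim_dotProduct_sumElim, add_mulVec, neg_mulVec, smul_mulVec,
      dotProduct_add, dotProduct_neg, dotProduct_smul, smul_mulVec, Sum.elim_comp_inl, Sum.elim_comp_inr] at h2 hs ⊢
    set a := x ⬝ᵥ (A * X) *ᵥ x
    set b := x ⬝ᵥ (X * Aᵀ) *ᵥ x
    set s := x ⬝ᵥ X *ᵥ x
    have hqs : (q - r) * s ≥ 0 := mul_nonneg (by linarith) (le_of_lt hs)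
    simp only [smul_eq_mul] at h2 ⊢
    nlinarith
  exact ⟨hpd.posSemidef, hpd⟩
end

section
/- Let q ∈ ℝ, r > 0, B ∈ ℝ^{n×n}, and P ≻ 0 a real symmetric positive definite matrix. Suppose the 2n×2n symmetric matrix [[rP, −qP − B], [−qP − Bᵀ, rP]] is positive definite. Then for every nonzero v ∈ ℂⁿ, the 2×2 Hermitian matrix [[r·v*Pv, −q·v*Pv − v*Bv], [−q·v*Pv − (v*Bv)*, r·v*Pv]] is positive definite, and hence |q + (v*Bv)/(v*Pv)| < r. -/
open ComplexOrder Matrix Complex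

lemma map_posDef' {m : Type*} [Fintype m] [DecidableEq m] {M : Matrix m m ℝ}
    (hM : M.PosDef) : (M.map (Complex.ofReal)).PosDef := by
  have hsym : ∀ i j, M j i = M i j := fun i j => by
    conv_lhs => rw [← hM.1]
    simp [Matrix.conjTranspose_apply]
  refine posDef_iff_dotProduct_mulVec.mpr ⟨?_, ?_⟩
  · ext i j
    simp [Matrix.conjTranspose_apply, Matrix.map_apply, Complex.conj_ofReal, hsym i j]
  · intro v hv
    set x : m → ℝ := fun i => (v i).re with hx
    set y : m → ℝ := fun i => (v i).im with hy
    have hvdec : v = (fun i => (x i : ℂ)) + Complex.I • (fun i => (y i : ℂ)) := by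
      funext i
      simp only [hx, hy, Pi.add_apply, Pi.smul_apply, smul_eq_mul]
      rw [mul_comm, Complex.re_add_im]
    set A := M.map (Complex.ofReal) with hA
    have hmv : ∀ z : m → ℝ, A *ᵥ (fun i => ((z i : ℂ))) = fun i => ((M *ᵥ z) i : ℂ) := by
      intro z
      funext i
      have := RingHom.map_mulVec (Complex.ofRealHom) M z i
      exact this.symm
    have hdot : ∀ z w : m → ℝ,
        (fun i => ((z i : ℂ))) ⬝ᵥ (fun i => ((w i : ℂ))) = ((z ⬝ᵥ w : ℝ) : ℂ) := by
      intro z w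
      simpa [Function.comp_def] using (RingHom.map_dotProduct (Complex.ofRealHom) z w).symm
    have hsymxy : y ⬝ᵥ M *ᵥ x = x ⬝ᵥ M *ᵥ y := by
      simp only [dotProduct, mulVec, Finset.mul_sum]
      rw [Finset.sum_comm]
      refine Finset.sum_congr rfl fun a _ => Finset.sum_congr rfl fun b _ => ?_
      rw [hsym b a]; ring
    have hstar : star v = (fun i => ((x i : ℂ))) + (-Complex.I) • (fun i => ((y i : ℂ))) := by
      funext i
      simp [hvdec, Complex.conj_ofReal]
    have hQ : star v ⬝ᵥ A *ᵥ v = ((x ⬝ᵥ M *ᵥ x + y ⬝ᵥ M *ᵥ y : ℝ) : ℂ) := by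
      conv_lhs => rw [hstar, hvdec]
      rw [mulVec_add, mulVec_smul]
      simp only [add_dotProduct, dotProduct_add, smul_dotProduct, dotProduct_smul,
        smul_eq_mul, hmv, hdot, neg_mul, neg_smul, neg_dotProduct]
      rw [hsymxy]
      push_cast
      linear_combination -((y ⬝ᵥ M *ᵥ y : ℝ) : ℂ) * Complex.I_mul_I
    have hxyne : x ≠ 0 ∨ y ≠ 0 := by
      by_contra h
      push_neg at h
      apply hv
      funext i
      have h1 := congrFun h.1 i
      have h2 := congrFun h.2 i
      simp only [hx, hy, Pi.zero_apply] at h1 h2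
      exact Complex.ext h1 h2
    have hpos : 0 < x ⬝ᵥ M *ᵥ x + y ⬝ᵥ M *ᵥ y := by
      rcases hxyne with h | h
      · have h1 := hM.dotProduct_mulVec_pos h
        have h2 := hM.posSemidef.dotProduct_mulVec_nonneg y
        simp only [star_trivial] at h1 h2
        linarith
      · have h1 := hM.dotProduct_mulVec_pos h
        have h2 := hM.posSemidef.dotProduct_mulVec_nonneg x
        simp only [star_trivial] at h1 h2
        linarith
    rw [hQ]
    exact Complex.zero_lt_real.mpr hpos

lemma conj_quad {k : Type*} [Fintype k] (A : Matrix k k ℂ) (v : k → ℂ) :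
    star v ⬝ᵥ (Aᴴ *ᵥ v) = star (star v ⬝ᵥ (A *ᵥ v)) := by
  calc star v ⬝ᵥ (Aᴴ *ᵥ v) = star (star (Aᴴ *ᵥ v) ⬝ᵥ v) := star_dotProduct _ _
    _ = star ((star v ᵥ* A) ⬝ᵥ v) := by rw [star_mulVec, conjTranspose_conjTranspose]
    _ = star (star v ⬝ᵥ (A *ᵥ v)) := by rw [← dotProduct_mulVec]

theorem stmt_19 {n : ℕ} (B P : Matrix (Fin n) (Fin n) ℝ) (q r : ℝ) (hr : 0 < r)
    (hP : P.PosDef)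
    (hblk : (Matrix.fromBlocks (r • P) (-(q • P) - B)
              (-(q • P) - Bᵀ) (r • P)).PosDef) :
    ∀ (v : Fin n → ℂ), v ≠ 0 →
      (!![(r : ℂ) * (star v ⬝ᵥ (P.map (Complex.ofReal) *ᵥ v)),
          -(q : ℂ) * (star v ⬝ᵥ (P.map (Complex.ofReal) *ᵥ v)) - star v ⬝ᵥ (B.map (Complex.ofReal) *ᵥ v);
          -(q : ℂ) * (star v ⬝ᵥ (P.map (Complex.ofReal) *ᵥ v)) - star (star v ⬝ᵥ (B.map (Complex.ofReal) *ᵥ v)),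
          (r : ℂ) * (star v ⬝ᵥ (P.map (Complex.ofReal) *ᵥ v))]).PosDef ∧
      ‖(q : ℂ) + (star v ⬝ᵥ (B.map (Complex.ofReal) *ᵥ v)) /
        (star v ⬝ᵥ (P.map (Complex.ofReal) *ᵥ v))‖ < r := by
  intro v hv
  have hPc : (P.map (Complex.ofReal)).PosDef := map_posDef' hP
  set Pc := P.map (Complex.ofReal) with hPcdef
  set Bc := B.map (Complex.ofReal) with hBcdef
  set c := star v ⬝ᵥ (Pc *ᵥ v) with hcdef
  set s := star v ⬝ᵥ (Bc *ᵥ v) with hsdef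
  have hc0 : 0 < c := hPc.dotProduct_mulVec_pos hv
  rw [Complex.lt_def] at hc0
  obtain ⟨hcre, hcim⟩ := hc0
  simp only [Complex.zero_re, Complex.zero_im] at hcre hcim
  set γ := c.re with hγ
  have hγpos : 0 < γ := hcre
  have hcγ : c = (γ : ℂ) := by
    apply Complex.ext <;> simp [hγ, ← hcim]
  -- block identities
  have h11 : (r • P).map (Complex.ofReal) = (r : ℂ) • Pc := by
    ext i j; simp [hPcdef]
  have h12 : (-(q • P) - B).map (Complex.ofReal) = -((q : ℂ) • Pc) - Bc := by
    ext i j; simp [hPcdef, hBcdef]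
  have hBT : (Bᵀ.map (Complex.ofReal)) = Bcᴴ := by
    ext i j; simp [hBcdef, conjTranspose_apply, Complex.conj_ofReal]
  have h21 : (-(q • P) - Bᵀ).map (Complex.ofReal) = -((q : ℂ) • Pc) - Bcᴴ := by
    ext i j
    rw [← hBT]
    simp [hPcdef]
  have hblkc : (Matrix.fromBlocks ((r : ℂ) • Pc) (-((q : ℂ) • Pc) - Bc)
      (-((q : ℂ) • Pc) - Bcᴴ) ((r : ℂ) • Pc)).PosDef := by
    have h := map_posDef' hblk
    rwa [Matrix.fromBlocks_map, h11, h12, h21] at h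
  have hsT : star v ⬝ᵥ (Bcᴴ *ᵥ v) = star s := by
    rw [conj_quad, hsdef]
  -- positive definiteness of the 2x2 matrix
  have hN : (!![(r : ℂ) * c, -(q : ℂ) * c - s;
      -(q : ℂ) * c - star s, (r : ℂ) * c]).PosDef := by
    refine posDef_iff_dotProduct_mulVec.mpr ⟨?_, ?_⟩
    · ext i j
      fin_cases i <;> fin_cases j <;>
        simp [conjTranspose_apply, hcγ, Complex.conj_ofReal, _root_.map_sub, _root_.map_mul,
          _root_.map_neg]
    · intro u hu
      have hue : u = ![u 0, u 1] := by funext i; fin_cases i <;> rfl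
      set a := u 0 with ha
      set b := u 1 with hb
      set xx : (Fin n ⊕ Fin n) → ℂ := Sum.elim (a • v) (b • v) with hxxdef
      have hab : a ≠ 0 ∨ b ≠ 0 := by
        by_contra h
        push_neg at h
        exact hu (by rw [hue, h.1, h.2]; funext i; fin_cases i <;> rfl)
      have hxx : xx ≠ 0 := by
        intro h0
        rcases hab with h | h
        · apply smul_ne_zero h hv
          funext i
          exact congrFun h0 (Sum.inl i)
        · apply smul_ne_zero h hv
          funext i
          exact congrFun h0 (Sum.inr i)
      have hpos := hblkc.dotProduct_mulVec_pos hxx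
      have hrhs : star xx ⬝ᵥ ((Matrix.fromBlocks ((r : ℂ) • Pc) (-((q : ℂ) • Pc) - Bc)
          (-((q : ℂ) • Pc) - Bcᴴ) ((r : ℂ) • Pc)) *ᵥ xx) =
          star a * a * ((r : ℂ) * c) + star a * b * (-(q : ℂ) * c - s)
            + star b * a * (-(q : ℂ) * c - star s) + star b * b * ((r : ℂ) * c) := by
        simp only [hxxdef, Function.star_sumElim, Matrix.fromBlocks_mulVec,
          sumElim_dotProduct_sumElim, Matrix.mulVec_smul, Matrix.sub_mulVec,
          Matrix.neg_mulVec, Matrix.smul_mulVec, star_smul, dotProduct_add,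
          smul_dotProduct, dotProduct_smul, dotProduct_sub, dotProduct_neg, smul_eq_mul,
          Sum.elim_comp_inl, Sum.elim_comp_inr, ← hcdef, ← hsdef, hsT]
        ring
      have hlhs : star u ⬝ᵥ ((!![(r : ℂ) * c, -(q : ℂ) * c - s;
          -(q : ℂ) * c - star s, (r : ℂ) * c]) *ᵥ u) =
          star a * ((r : ℂ) * c * a + (-(q : ℂ) * c - s) * b)
            + star b * ((-(q : ℂ) * c - star s) * a + (r : ℂ) * c * b) := by
        simp [Matrix.mulVec, dotProduct, Fin.sum_univ_two, ha, hb]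
      rw [hlhs]
      rw [hrhs] at hpos
      have heq : star a * ((r : ℂ) * c * a + (-(q : ℂ) * c - s) * b)
            + star b * ((-(q : ℂ) * c - star s) * a + (r : ℂ) * c * b) =
          star a * a * ((r : ℂ) * c) + star a * b * (-(q : ℂ) * c - s)
            + star b * a * (-(q : ℂ) * c - star s) + star b * b * ((r : ℂ) * c) := by
        ring
      rw [heq]
      exact hpos
  refine ⟨hN, ?_⟩
  -- determinant argument
  set w : ℂ := -(q : ℂ) * c - s with hwdef
  have hstarw : -(q : ℂ) * c - star s = star w := by
    rw [hwdef]
    simp [hcγ, Complex.conj_ofReal]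
  have hdet := hN.det_pos
  rw [Matrix.det_fin_two_of] at hdet
  have hdet2 : (r : ℂ) * c * ((r : ℂ) * c) - (-(q : ℂ) * c - s) * (-(q : ℂ) * c - star s)
      = ((r ^ 2 * γ ^ 2 - ‖w‖ ^ 2 : ℝ) : ℂ) := by
    rw [hstarw, Complex.star_def, Complex.mul_conj,
      show ((Complex.normSq w : ℝ) : ℂ) = ((‖w‖ ^ 2 : ℝ) : ℂ) by rw [Complex.sq_norm],
      hcγ]
    push_cast
    ring
  rw [hdet2] at hdet
  have habs : ‖w‖ < r * γ := by
    have h1 : 0 < r ^ 2 * γ ^ 2 - ‖w‖ ^ 2 := Complex.zero_lt_real.mp hdet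
    nlinarith [norm_nonneg w, mul_pos hr hγpos]
  have hcne : c ≠ 0 := by
    rw [hcγ]
    exact_mod_cast hγpos.ne'
  have hqsc : (q : ℂ) + s / c = -w / c := by
    rw [hwdef]
    field_simp
    ring
  rw [hqsc]
  rw [norm_div, norm_neg]
  rw [hcγ, Complex.norm_real, Real.norm_eq_abs, abs_of_pos hγpos]
  rw [div_lt_iff₀ hγpos]
  linarith [habs]
end
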